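/- Sum-aggregation upper bound validity: Let I1, I2, I3 be disjoint finite index sets with bounds l(i) ≤ x(i) ≤ u(i). For any S2 ⊆ I2 and S3 ⊆ I3 with |I2 \ S2| + |S3| ≤ s, the quantity Σ_{i∈I1∪S2} x(i) + Σ_{i∈S3} x(i) is at most Σ_{i∈I1∪I2} u(i) + (the sum of the s largest values of max(y_j, 0) over j in the multiset Y consisting of −l(i) for i ∈ I2 together with u(i) for i ∈ I3, where each value is padded with 0 if fewer than s elements exist). -/

import Mathlib

private lemma takeC (a : ℝ) : ∀ (k : ℕ) (l : List ℝ), (∀ y ∈ l, y ≤ a) →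
    ((l.take (k+1)).map (fun y => max y 0)).sum ≤
      max a 0 + ((l.take k).map (fun y => max y 0)).sum
  | 0, [], _ => by simp [le_max_right]
  | 0, b :: t, h => by
    simp only [List.take_succ_cons, List.take_zero, List.map_cons, List.map_nil,
      List.sum_cons, List.sum_nil, add_zero]
    exact max_le_max (h b (by simp)) le_rfl
  | k+1, [], _ => by simp [le_max_right]
  | k+1, b :: t, h => by
    simp only [List.take_succ_cons, List.map_cons, List.sum_cons]
    have := takeC a k t (fun y hy => h y (by simp [hy]))
    linarith

private lemma subA : ∀ {l1 l2 : List ℝ}, l1.Sublist l2 →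
    l2.Pairwise (fun a b => b ≤ a) → ∀ s : ℕ, l1.length ≤ s →
    (l1.map (fun y => max y 0)).sum ≤ ((l2.take s).map (fun y => max y 0)).sum := by
  intro l1 l2 h
  induction h with
  | slnil => intro _ s _; simp
  | @cons l1' l2' a h ih =>
    intro hs s hlen
    rw [List.pairwise_cons] at hs
    match s with
    | 0 =>
      rw [Nat.le_zero, List.length_eq_zero_iff] at hlen
      subst hlen; simp
    | k+1 =>
      calc (l1'.map (fun y => max y 0)).sum
          ≤ ((l2'.take (k+1)).map (fun y => max y 0)).sum := ih hs.2 (k+1) hlen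
        _ ≤ max a 0 + ((l2'.take k).map (fun y => max y 0)).sum := takeC a k l2' hs.1
        _ = (((a :: l2').take (k+1)).map (fun y => max y 0)).sum := by simp
  | @cons_cons l1' l2' a h ih =>
    intro hs s hlen
    rw [List.pairwise_cons] at hs
    match s with
    | 0 => simp at hlen
    | k+1 =>
      simp only [List.take_succ_cons, List.map_cons, List.sum_cons, List.length_cons] at *
      exact add_le_add_right (ih hs.2 k (by omega)) _

private lemma sumB : ∀ (s : ℕ) (l : List ℝ),
    ∑ j ∈ Finset.range s, max (l.getD j 0) 0 = ((l.take s).map (fun y => max y 0)).sum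
  | 0, _ => by simp
  | s+1, [] => by simp [List.getD]
  | s+1, a :: t => by
    rw [Finset.sum_range_succ']
    simp only [List.getD_cons_succ, List.getD_cons_zero, List.take_succ_cons, List.map_cons,
      List.sum_cons, sumB s t]
    ring

noncomputable def kthLargest (Y : Multiset ℝ) (i : ℕ) : ℝ :=
  ((Y.sort (· ≤ ·)).reverse).getD (i - 1) 0

noncomputable def kthSmallest (Y : Multiset ℝ) (i : ℕ) : ℝ :=
  (Y.sort (· ≤ ·)).getD (i - 1) 0

/-- Sum-aggregation upper bound validity. -/
theorem stmt1 {ι : Type*} [DecidableEq ι] (I1 I2 I3 : Finset ι)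
    (h12 : Disjoint I1 I2) (h13 : Disjoint I1 I3) (h23 : Disjoint I2 I3)
    (l x u : ι → ℝ) (hb : ∀ i ∈ I1 ∪ I2 ∪ I3, l i ≤ x i ∧ x i ≤ u i) (s : ℕ)
    (S2 : Finset ι) (hS2 : S2 ⊆ I2) (S3 : Finset ι) (hS3 : S3 ⊆ I3)
    (hbud : (I2 \ S2).card + S3.card ≤ s) :
    (∑ i ∈ I1 ∪ S2, x i) + ∑ i ∈ S3, x i ≤
      (∑ i ∈ I1 ∪ I2, u i) +
        ∑ j ∈ Finset.range s,
          max (kthLargest ((I2.val.map fun i => -(l i)) + I3.val.map u) (j + 1)) 0 := by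
  set Y : Multiset ℝ := (I2.val.map fun i => -(l i)) + I3.val.map u with hY
  set T : Multiset ℝ := ((I2 \ S2).val.map fun i => -(l i)) + S3.val.map u with hT
  -- Step 2 : the multiset bound
  have hTY : T ≤ Y := by
    refine add_le_add (Multiset.map_le_map ?_) (Multiset.map_le_map ?_)
    · exact Finset.val_le_iff.mpr (Finset.sdiff_subset)
    · exact Finset.val_le_iff.mpr hS3
  have hsub : (T.sort (· ≤ ·)).Sublist (Y.sort (· ≤ ·)) :=
    List.sublist_of_subperm_of_pairwise
      (Multiset.coe_le.mp (by rw [Multiset.sort_eq, Multiset.sort_eq]; exact hTY))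
      (Multiset.pairwise_sort _ _) (Multiset.pairwise_sort _ _)
  have hrev : ((T.sort (· ≤ ·)).reverse).Sublist ((Y.sort (· ≤ ·)).reverse) :=
    hsub.reverse
  have hsorted : ((Y.sort (· ≤ ·)).reverse).Pairwise (fun a b => b ≤ a) :=
    List.pairwise_reverse.mpr (Multiset.pairwise_sort _ _)
  have hlen : ((T.sort (· ≤ ·)).reverse).length ≤ s := by
    rw [List.length_reverse, Multiset.length_sort]
    have hc : Multiset.card T = (I2 \ S2).card + S3.card := by
      rw [hT, Multiset.card_add, Multiset.card_map, Multiset.card_map]; rfl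
    rw [hc]; exact hbud
  have main := subA hrev hsorted s hlen
  have hLHS : (((T.sort (· ≤ ·)).reverse).map (fun y => max y 0)).sum
      = ((T.map (fun y => max y 0)).sum : ℝ) := by
    rw [List.map_reverse, List.sum_reverse]
    conv_rhs => rw [← Multiset.sort_eq T (· ≤ ·)]
    rw [Multiset.map_coe, Multiset.sum_coe]
  have hRHS : (∑ j ∈ Finset.range s, max (kthLargest Y (j + 1)) 0)
      = ((((Y.sort (· ≤ ·)).reverse).take s).map (fun y => max y 0)).sum := by
    rw [← sumB]
    simp [kthLargest]
  have step2 : ((T.map (fun y => max y 0)).sum : ℝ)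
      ≤ ∑ j ∈ Finset.range s, max (kthLargest Y (j + 1)) 0 := by
    rw [← hLHS, hRHS]; exact main
  -- Step 1 : basic bounding
  have hTsum : ((T.map (fun y => max y 0)).sum : ℝ)
      = (∑ i ∈ I2 \ S2, max (-(l i)) 0) + ∑ i ∈ S3, max (u i) 0 := by
    show ((((I2 \ S2).val.map fun i => -(l i)) + S3.val.map u).map (fun y => max y 0)).sum = _
    rw [Multiset.map_add, Multiset.sum_add, Multiset.map_map, Multiset.map_map]
    rfl
  have hsplit : (∑ i ∈ I1 ∪ I2, u i)
      = (∑ i ∈ I1 ∪ S2, u i) + ∑ i ∈ I2 \ S2, u i := by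
    rw [show I1 ∪ I2 = (I1 ∪ S2) ∪ (I2 \ S2) by
          rw [Finset.union_assoc, Finset.union_sdiff_of_subset hS2]]
    refine Finset.sum_union ?_
    refine Finset.disjoint_union_left.mpr ⟨h12.mono_right Finset.sdiff_subset, ?_⟩
    exact Finset.sdiff_disjoint.symm
  have h1 : (∑ i ∈ I1 ∪ S2, x i) ≤ ∑ i ∈ I1 ∪ S2, u i := by
    refine Finset.sum_le_sum fun i hi => (hb i ?_).2
    rcases Finset.mem_union.mp hi with h | h
    · exact Finset.mem_union_left _ (Finset.mem_union_left _ h)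
    · exact Finset.mem_union_left _ (Finset.mem_union_right _ (hS2 h))
  have h3 : (∑ i ∈ S3, x i) ≤ ∑ i ∈ S3, max (u i) 0 := by
    refine Finset.sum_le_sum fun i hi => le_trans ?_ (le_max_left _ _)
    exact (hb i (Finset.mem_union_right _ (hS3 hi))).2
  have h2 : (0:ℝ) ≤ ∑ i ∈ I2 \ S2, (u i + max (-(l i)) 0) := by
    refine Finset.sum_nonneg fun i hi => ?_
    have hi2 : i ∈ I1 ∪ I2 ∪ I3 :=
      Finset.mem_union_left _ (Finset.mem_union_right _ (Finset.sdiff_subset hi))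
    have hlu : l i ≤ u i := le_trans (hb i hi2).1 (hb i hi2).2
    have := le_max_left (-(l i)) 0
    linarith
  rw [Finset.sum_add_distrib] at h2
  rw [hsplit]
  have := step2
  rw [hTsum] at this
  linarith
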